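/- Let v₁,…,vₙ (counterclockwise, at height one) span a convex polygon P, r > 0, and let b be in the relative interior of rP (viewed in the hyperplane of height r). Define ℓⁱ(b) = det(vᵢ₋₁,vᵢ,vᵢ₊₁)/(det(b,vᵢ₋₁,vᵢ)·det(b,vᵢ,vᵢ₊₁)) (indices mod n) and V(b) = Σᵢ ℓⁱ(b). Then the point σ(b) with coordinates σⁱ(b) = (r/V(b))·ℓⁱ(b) satisfies π(σ(b)) = b (where π(φ) = Σᵢφⁱvᵢ), and the quadratic Q(φ) = Σ_{j<k} det(b,vⱼ,v_k)φʲφᵏ attains the value Q(σ(b)) = r/V(b) there. -/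

import Mathlib

/-- The determinant of the 3×3 matrix with columns `a`, `b`, `c`. -/
noncomputable def det3 (a b c : Fin 3 → ℝ) : ℝ :=
  Matrix.det (Matrix.of fun i j => ![a, b, c] j i)

lemma det3_eq (a b c : Fin 3 → ℝ) : det3 a b c =
    a 0 * b 1 * c 2 - a 0 * c 1 * b 2 - b 0 * a 1 * c 2 + b 0 * c 1 * a 2
      + c 0 * a 1 * b 2 - c 0 * b 1 * a 2 := by
  simp [det3, Matrix.det_fin_three]

lemma det3_cyclic (a b c : Fin 3 → ℝ) : det3 a b c = det3 c a b := by
  simp only [det3_eq]; ring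

lemma det3_self13 (a b : Fin 3 → ℝ) : det3 a b a = 0 := by simp [det3_eq]
lemma det3_self23 (a b : Fin 3 → ℝ) : det3 a b b = 0 := by simp [det3_eq]

lemma master1 (r : ℝ) (x y z w : Fin 3 → ℝ) (hx : x 2 = r) (hy : y 2 = 1)
    (hz : z 2 = 1) (hw : w 2 = 1) (c : Fin 3) :
    r * det3 y z w * z c =
      det3 y z w * x c + det3 x y z * (z c - w c) - det3 x z w * (y c - z c) := by
  fin_cases c <;> simp [det3_eq, hx, hy, hz, hw] <;> ring

lemma master2 (r : ℝ) (x y z w u : Fin 3 → ℝ) (hx : x 2 = r) (hy : y 2 = 1)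
    (hz : z 2 = 1) (hw : w 2 = 1) :
    r * det3 y z w * det3 x z u =
      det3 x z w * (det3 x z u - det3 x y u)
        - det3 x y z * (det3 x w u - det3 x z u) := by
  simp only [det3_eq, hx, hy, hz, hw]; ring

lemma det3_sum_right {ι : Type*} (s : Finset ι) (x y : Fin 3 → ℝ) (f : ι → ℝ)
    (w : ι → Fin 3 → ℝ) :
    det3 x y (∑ i ∈ s, f i • w i) = ∑ i ∈ s, f i * det3 x y (w i) := by
  induction s using Finset.cons_induction with
  | empty => simp [det3_eq]
  | cons a s ha ih =>
    rw [Finset.sum_cons, Finset.sum_cons, ← ih]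
    simp only [det3_eq, Pi.add_apply, Pi.smul_apply, smul_eq_mul]
    ring

open Fin.NatCast in
/-- telescoping sum over `Iio k` in `Fin n`. -/
lemma fin_tele {n : ℕ} [NeZero n] (g : Fin n → ℝ) (k : Fin n) :
    ∑ j ∈ Finset.Iio k, (g (j - 1) - g j) = g (0 - 1) - g (k - 1) := by
  have conv1 : ∑ j ∈ Finset.Iio k, (g (j - 1) - g j)
      = ∑ m ∈ Finset.range k.val, (g ((m : Fin n) - 1) - g (m : Fin n)) := by
    rw [← Nat.Iio_eq_range, ← Fin.map_valEmbedding_Iio, Finset.sum_map]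
    apply Finset.sum_congr rfl
    intro j _
    simp [Fin.cast_val_eq_self]
  rw [conv1]
  have conv2 : ∀ m ∈ Finset.range k.val,
      (g ((m : Fin n) - 1) - g (m : Fin n))
        = ((fun m : ℕ => g ((m : Fin n) - 1)) m
            - (fun m : ℕ => g ((m : Fin n) - 1)) (m + 1)) := by
    intro m _
    have : ((m + 1 : ℕ) : Fin n) - 1 = (m : Fin n) := by push_cast; exact add_sub_cancel_right _ _
    simp only [this]
  rw [Finset.sum_congr rfl conv2, Finset.sum_range_sub']
  simp [Fin.cast_val_eq_self]

/-- With
`ℓⁱ(b) = det(vᵢ₋₁,vᵢ,vᵢ₊₁)/(det(b,vᵢ₋₁,vᵢ)·det(b,vᵢ,vᵢ₊₁))` (cyclic indices)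
and `V(b) = Σᵢ ℓⁱ(b)`, the point `σ(b)` with `σⁱ(b) = (r/V(b))·ℓⁱ(b)` lies in
the fiber `π(σ(b)) = b`, and the quadratic `Q(φ) = Σ_{j<k} det(b,vⱼ,v_k)φʲφᵏ`
takes the value `Q(σ(b)) = r/V(b)` there. -/
theorem fiberwise_critical_point (n : ℕ) [NeZero n] (hn : 3 ≤ n)
    (v : Fin n → (Fin 3 → ℝ)) (hheight : ∀ i, v i 2 = 1)
    (hccw : ∀ i j k : Fin n, i < j → j < k → 0 < det3 (v i) (v j) (v k))
    (r : ℝ) (hr : 0 < r) (b : Fin 3 → ℝ) (hb : b 2 = r)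
    (hbpos : ∀ i : Fin n, 0 < det3 b (v i) (v (i + 1)))
    (ell : Fin n → ℝ)
    (hell : ∀ i, ell i = det3 (v (i - 1)) (v i) (v (i + 1))
      / (det3 b (v (i - 1)) (v i) * det3 b (v i) (v (i + 1))))
    (V : ℝ) (hV : V = ∑ i, ell i)
    (σ : Fin n → ℝ) (hσ : ∀ i, σ i = (r / V) * ell i) :
    (∑ i, σ i • v i = b) ∧
    (∑ j, ∑ k ∈ Finset.Ioi j, det3 b (v j) (v k) * σ j * σ k = r / V) := by
  have hsub1 : ∀ i : Fin n, (i - 1) + 1 = i := fun i => sub_add_cancel i 1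
  have haneA : ∀ i : Fin n, det3 b (v (i - 1)) (v i) ≠ 0 := by
    intro i
    have := (hbpos (i - 1)).ne'
    rwa [hsub1 i] at this
  have haneB : ∀ i : Fin n, det3 b (v i) (v (i + 1)) ≠ 0 := fun i => (hbpos i).ne'
  -- positivity of the cyclic determinants
  have hD : ∀ i : Fin n, 0 < det3 (v (i - 1)) (v i) (v (i + 1)) := by
    intro i
    obtain ⟨m, rfl⟩ : ∃ m, n = m + 1 := ⟨n - 1, by omega⟩
    by_cases h0 : i.val = 0
    · have hi : i = 0 := Fin.ext h0
      subst hi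
      have e1 : ((0 : Fin (m+1)) - 1).val = m := by
        rw [Fin.coe_sub_one]; simp
      have e2 : ((0 : Fin (m+1)) + 1).val = 1 := by
        simp [Fin.val_one', Nat.mod_eq_of_lt (by omega : 1 < m + 1)]
      rw [det3_cyclic, det3_cyclic]
      exact hccw _ _ _ (by rw [Fin.lt_def, e2]; simp)
        (by rw [Fin.lt_def, e1, e2]; omega)
    · by_cases hlast : i.val = m
      · have e1 : (i - 1).val = m - 1 := by
          rw [Fin.coe_sub_one, if_neg (by simp [Fin.ext_iff, h0])]; omega
        have e2 : (i + 1).val = 0 := by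
          rw [Fin.add_def]
          simp only [Fin.val_one']
          have h1 : (1 : ℕ) % (m + 1) = 1 := Nat.mod_eq_of_lt (by omega)
          have h2 : i.val + 1 % (m+1) = m + 1 := by rw [h1]; omega
          simp [h2]
        rw [det3_cyclic]
        exact hccw _ _ _ (by rw [Fin.lt_def, e1, e2]; omega)
          (by rw [Fin.lt_def, e1]; omega)
      · have e1 : (i - 1).val = i.val - 1 := by
          rw [Fin.coe_sub_one, if_neg (by simp [Fin.ext_iff, h0])]
        have e2 : (i + 1).val = i.val + 1 := by
          rw [Fin.add_def]
          simp only [Fin.val_one']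
          have h1 : (1 : ℕ) % (m + 1) = 1 := Nat.mod_eq_of_lt (by omega)
          rw [h1]
          exact Nat.mod_eq_of_lt (by have := i.isLt; omega)
        exact hccw _ _ _ (by rw [Fin.lt_def, e1]; omega)
          (by rw [Fin.lt_def, e2]; omega)
  have hbposA : ∀ i : Fin n, 0 < det3 b (v (i - 1)) (v i) := by
    intro i
    have := hbpos (i - 1)
    rwa [hsub1 i] at this
  have hellpos : ∀ i, 0 < ell i := by
    intro i
    rw [hell i]
    exact div_pos (hD i) (mul_pos (hbposA i) (hbpos i))
  have hVpos : 0 < V := by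
    rw [hV]
    exact Finset.sum_pos (fun i _ => hellpos i) Finset.univ_nonempty
  have hVne : V ≠ 0 := hVpos.ne'
  -- Part A, coordinatewise
  have hA : ∀ c : Fin 3, ∑ i, σ i * v i c = b c := by
    intro c
    have key : ∀ i : Fin n, r * (ell i * v i c)
        = ell i * b c + (v i c - v (i + 1) c) / det3 b (v i) (v (i + 1))
          - (v (i - 1) c - v i c) / det3 b (v (i - 1)) (v i) := by
      intro i
      have h1 := master1 r b (v (i - 1)) (v i) (v (i + 1)) hb (hheight _)
        (hheight _) (hheight _) c
      rw [hell i]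
      have hA' := haneA i
      have hB' := haneB i
      field_simp
      linear_combination h1
    have sum1 : ∑ i : Fin n, (v (i - 1) c - v i c) / det3 b (v (i - 1)) (v i)
        = ∑ i : Fin n, (v i c - v (i + 1) c) / det3 b (v i) (v (i + 1)) := by
      apply Fintype.sum_equiv (Equiv.subRight (1 : Fin n))
      intro i
      simp only [Equiv.subRight_apply]
      rw [hsub1 i]
    have hs : r * ∑ i, ell i * v i c = V * b c := by
      rw [Finset.mul_sum, Finset.sum_congr rfl (fun i _ => key i),
        Finset.sum_sub_distrib, Finset.sum_add_distrib, sum1, ← Finset.sum_mul, ← hV]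
      ring
    have : ∑ i, σ i * v i c = (r / V) * ∑ i, ell i * v i c := by
      rw [Finset.mul_sum]
      exact Finset.sum_congr rfl (fun i _ => by rw [hσ i]; ring)
    rw [this]
    have hsum : ∑ i, ell i * v i c = V * b c / r := by
      rw [eq_div_iff hr.ne']
      linarith [hs]
    rw [hsum]
    field_simp
    all_goals ring
  have hAvec : ∑ i, σ i • v i = b := by
    funext c
    rw [Finset.sum_apply]
    simpa [smul_eq_mul] using hA c
  refine ⟨hAvec, ?_⟩
  -- Part B
  have hswap : (∑ j, ∑ k ∈ Finset.Ioi j, det3 b (v j) (v k) * σ j * σ k)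
      = ∑ k, ∑ j ∈ Finset.Iio k, det3 b (v j) (v k) * σ j * σ k :=
    Finset.sum_comm' (by simp [Finset.mem_Ioi, Finset.mem_Iio, and_comm])
  rw [hswap]
  -- linear sums vanish
  have lin : ∀ y : Fin 3 → ℝ, ∑ k, σ k * det3 b y (v k) = det3 b y b := by
    intro y
    rw [← det3_sum_right Finset.univ b y σ v, hAvec]
  have hsσ : ∑ k, σ k = r := by
    rw [Finset.sum_congr rfl (fun i _ => hσ i), ← Finset.mul_sum, ← hV]
    field_simp
  -- inner sum evaluation
  have inner : ∀ k : Fin n, ∑ j ∈ Finset.Iio k, det3 b (v j) (v k) * σ j * σ k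
      = σ k * ((det3 b (v 0) (v k) - det3 b (v (0 - 1)) (v k))
          / det3 b (v (0 - 1)) (v 0) + 1) / V := by
    intro k
    obtain ⟨g, hgdef⟩ : ∃ g : Fin n → ℝ, ∀ j,
        g j = (det3 b (v (j + 1)) (v k) - det3 b (v j) (v k))
          / det3 b (v j) (v (j + 1)) := ⟨_, fun j => rfl⟩
    have key2 : ∀ j : Fin n, ell j * det3 b (v j) (v k) = (g (j - 1) - g j) / r := by
      intro j
      have h2 := master2 r b (v (j - 1)) (v j) (v (j + 1)) (v k) hb (hheight _)
        (hheight _) (hheight _)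
      rw [hgdef, hgdef, hsub1 j, hell j]
      have hA' := haneA j
      have hB' := haneB j
      field_simp
      linear_combination h2
    have step : ∑ j ∈ Finset.Iio k, det3 b (v j) (v k) * σ j * σ k
        = σ k * (r / V) * ∑ j ∈ Finset.Iio k, ell j * det3 b (v j) (v k) := by
      rw [Finset.mul_sum]
      exact Finset.sum_congr rfl (fun j _ => by rw [hσ j]; ring)
    rw [step, Finset.sum_congr rfl (fun j _ => key2 j), ← Finset.sum_div,
      fin_tele g k]
    have hgk : g (k - 1) = -1 := by
      rw [hgdef, hsub1 k, det3_self23, zero_sub, neg_div, div_self (haneA k)]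
    have hg0 : g (0 - 1) = (det3 b (v 0) (v k) - det3 b (v (0 - 1)) (v k))
        / det3 b (v (0 - 1)) (v 0) := by
      rw [hgdef, hsub1 0]
    rw [hgk, hg0, sub_neg_eq_add]
    field_simp
    all_goals ring
  rw [Finset.sum_congr rfl (fun k _ => inner k)]
  have hA0 : det3 b (v (0 - 1)) (v 0) ≠ 0 := haneA 0
  have expand : ∀ k : Fin n,
      σ k * ((det3 b (v 0) (v k) - det3 b (v (0 - 1)) (v k))
          / det3 b (v (0 - 1)) (v 0) + 1) / V
        = (σ k * det3 b (v 0) (v k)) / (det3 b (v (0 - 1)) (v 0) * V)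
          - (σ k * det3 b (v (0 - 1)) (v k)) / (det3 b (v (0 - 1)) (v 0) * V)
          + σ k / V := by
    intro k
    have hA0' : det3 b (v (-1 : Fin n)) (v 0) ≠ 0 := by
      have := hA0; rwa [zero_sub] at this
    field_simp
    all_goals ring
  rw [Finset.sum_congr rfl (fun k _ => expand k), Finset.sum_add_distrib,
    Finset.sum_sub_distrib, ← Finset.sum_div, ← Finset.sum_div, ← Finset.sum_div,
    lin (v 0), lin (v (0 - 1)), hsσ]
  simp only [det3_self13]
  simp
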